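/- Let 0 < t_1 < ... < t_n and let A be the n × (k+1) matrix with entries A_{i,j} = t_i^j for 1 ≤ i ≤ n, 0 ≤ j ≤ k. Then every minor of A (of every size) is positive. -/

import Mathlib

open scoped BigOperators

/-- Number of sign changes between consecutive entries of a list of reals. -/
noncomputable def listVar : List ℝ → ℕ
  | a :: b :: t => (if a * b < 0 then 1 else 0) + listVar (b :: t)
  | _ => 0

/-- `var v` : the number of sign changes of `v`, ignoring zero entries. -/
noncomputable def var {n : ℕ} (v : Fin n → ℝ) : ℕ :=
  listVar ((List.ofFn v).filter (fun x => x ≠ 0))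

/-- `varbar v` : the maximum of `var w` over all `w` agreeing with `v` on the
nonzero entries of `v`. -/
noncomputable def varbar {n : ℕ} (v : Fin n → ℝ) : ℕ :=
  sSup {m | ∃ w : Fin n → ℝ, (∀ i, v i ≠ 0 → w i = v i) ∧ var w = m}

/-- `altv v = (v 0, -v 1, v 2, ...)`. -/
def altv {n : ℕ} (v : Fin n → ℝ) : Fin n → ℝ := fun i => (-1 : ℝ) ^ (i : ℕ) * v i

/-- A vector with entries in `{0, 1, -1}`, representing a sign vector. -/
def IsSignVec {n : ℕ} (σ : Fin n → ℝ) : Prop := ∀ i, σ i = 0 ∨ σ i = 1 ∨ σ i = -1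


open Polynomial Finset Filter


noncomputable def posRoots (p : ℝ[X]) : Finset ℝ := p.roots.toFinset.filter (fun x => 0 < x)

lemma posRoots_card_le_derivative (p : ℝ[X]) :
    (posRoots p).card ≤ (posRoots (derivative p)).card + 1 := by
  rcases eq_or_ne (derivative p) 0 with hp' | hp'
  · rw [eq_C_of_derivative_eq_zero hp']
    simp [posRoots]
  have hp : p ≠ 0 := ne_of_apply_ne derivative (by rwa [derivative_zero])
  refine Finset.card_le_of_interleaved fun x hx y hy hxy hxy' => ?_
  simp only [posRoots, Finset.mem_filter, Multiset.mem_toFinset, mem_roots hp] at hx hy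
  obtain ⟨z, hz1, hz2⟩ := exists_deriv_eq_zero hxy p.continuousOn (hx.1.trans hy.1.symm)
  refine ⟨z, ?_, hz1.1, hz1.2⟩
  simp only [posRoots, Finset.mem_filter, Multiset.mem_toFinset, mem_roots hp']
  exact ⟨by rwa [IsRoot, ← p.deriv], hx.2.trans hz1.1⟩

lemma posRoots_card_lt_support :
    ∀ (N : ℕ) (p : ℝ[X]), p.natDegree ≤ N → p ≠ 0 → (posRoots p).card < p.support.card := by
  intro N
  induction N with
  | zero =>
    intro p hd hp
    rw [eq_C_of_natDegree_le_zero hd]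
    have h0 : p.coeff 0 ≠ 0 := by
      intro h; exact hp (by rw [eq_C_of_natDegree_le_zero hd, h, map_zero])
    simp [posRoots, support_C h0, roots_C]
  | succ N ih =>
    intro p hd hp
    by_cases h0 : p.coeff 0 = 0
    · have hq : p.divX ≠ 0 := by
        intro h
        apply hp
        rw [← p.divX_mul_X_add, h, h0]; simp
      have h1 : posRoots p = posRoots p.divX := by
        ext x
        simp only [posRoots, Finset.mem_filter, Multiset.mem_toFinset, mem_roots hp,
          mem_roots hq, and_congr_left_iff]
        intro hx
        have hev : p.eval x = p.divX.eval x * x := by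
          conv_lhs => rw [← p.divX_mul_X_add]
          simp [h0]
        constructor
        · intro h
          rw [IsRoot] at h ⊢
          rw [hev, mul_eq_zero] at h
          rcases h with h | h
          · exact h
          · exact absurd h hx.ne'
        · intro h
          rw [IsRoot] at h ⊢
          rw [hev, h, zero_mul]
      have h2 : p.support.card = p.divX.support.card := by
        refine (Finset.card_bij (fun k _ => k + 1) ?_ ?_ ?_).symm
        · intro k hk
          simp only [mem_support_iff, coeff_divX] at hk ⊢
          exact hk
        · intro a _ b _ h; simpa using h
        · intro m hm
          simp only [mem_support_iff] at hm
          have hm0 : m ≠ 0 := by rintro rfl; exact hm h0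
          refine ⟨m - 1, ?_, by show m - 1 + 1 = m; omega⟩
          simp only [mem_support_iff, coeff_divX]
          rwa [Nat.sub_add_cancel (Nat.one_le_iff_ne_zero.2 hm0)]
      have hdeg : p.divX.natDegree ≤ N := by
        have := p.natDegree_divX_eq_natDegree_tsub_one
        omega
      rw [h1, h2]
      exact ih _ hdeg hq
    · by_cases hD : derivative p = 0
      · rw [eq_C_of_derivative_eq_zero hD]
        simp [posRoots, support_C h0, roots_C]
      · have hcard := posRoots_card_le_derivative p
        have hdd : p.natDegree ≠ 0 := by
          intro h
          exact hD (derivative_of_natDegree_zero h)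
        have hdeg : (derivative p).natDegree ≤ N := by
          have := natDegree_derivative_lt hdd
          omega
        have hlt := ih _ hdeg hD
        have h3 : (derivative p).support.card + 1 ≤ p.support.card := by
          have hbij : (derivative p).support.card = (p.support.erase 0).card := by
            refine Finset.card_bij (fun k _ => k + 1) ?_ ?_ ?_
            · intro k hk
              rw [mem_support_derivative] at hk
              exact Finset.mem_erase.2 ⟨Nat.succ_ne_zero k, hk⟩
            · intro a _ b _ h; simpa using h
            · intro m hm
              rw [Finset.mem_erase] at hm
              refine ⟨m - 1, ?_, by show m - 1 + 1 = m; have := hm.1; omega⟩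
              rw [mem_support_derivative, Nat.sub_add_cancel (Nat.one_le_iff_ne_zero.2 hm.1)]
              exact hm.2
          have h0m : (0 : ℕ) ∈ p.support := mem_support_iff.2 h0
          rw [hbij, Finset.card_erase_of_mem h0m]
          have : 1 ≤ p.support.card := Finset.card_pos.2 ⟨0, h0m⟩
          omega
        omega


lemma vandermonde_det_ne_zero {l : ℕ} (x : Fin l → ℝ) (hx0 : ∀ i, 0 < x i) (hx : StrictMono x)
    (e : Fin l → ℕ) (he : StrictMono e)
    (key : ∀ p : ℝ[X], p ≠ 0 →
      ((p.roots.toFinset.filter (fun x => 0 < x)).card < p.support.card)) :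
    Matrix.det (Matrix.of fun i j => x i ^ e j) ≠ 0 := by
  intro hdet
  obtain ⟨a, ha, hva⟩ := Matrix.exists_mulVec_eq_zero_iff.2 hdet
  set p : ℝ[X] := ∑ j, C (a j) * X ^ e j with hp
  have hcoeff : ∀ j, p.coeff (e j) = a j := by
    intro j
    rw [hp, finset_sum_coeff, Finset.sum_eq_single j]
    · simp
    · intro b _ hb
      rw [coeff_C_mul, coeff_X_pow, if_neg (fun h => hb (he.injective h.symm)), mul_zero]
    · simp
  have hpne : p ≠ 0 := by
    intro h
    apply ha
    funext j
    have h2 := hcoeff j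
    rw [h] at h2
    simpa using h2.symm
  have hsupp : p.support ⊆ Finset.image e Finset.univ := by
    intro m hm
    rw [mem_support_iff] at hm
    by_contra hmem
    apply hm
    rw [hp, finset_sum_coeff]
    apply Finset.sum_eq_zero
    intro j _
    have : e j ≠ m := by
      intro h; exact hmem (Finset.mem_image.2 ⟨j, Finset.mem_univ _, h⟩)
    rw [coeff_C_mul, coeff_X_pow, if_neg this.symm, mul_zero]
  have heval : ∀ i, p.eval (x i) = 0 := by
    intro i
    have h2 := congrFun hva i
    simp only [Matrix.mulVec, dotProduct, Matrix.of_apply, Pi.zero_apply] at h2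
    rw [hp]
    simp only [eval_finset_sum, eval_mul, eval_C, eval_pow, eval_X]
    rw [← h2]
    exact Finset.sum_congr rfl fun j _ => mul_comm _ _
  have hsub : Finset.image x Finset.univ ⊆ p.roots.toFinset.filter (fun y => 0 < y) := by
    intro y hy
    obtain ⟨i, _, rfl⟩ := Finset.mem_image.1 hy
    exact Finset.mem_filter.2 ⟨Multiset.mem_toFinset.2 ((mem_roots hpne).2 (heval i)), hx0 i⟩
  have h1 : l ≤ (p.roots.toFinset.filter (fun y => 0 < y)).card := by
    calc l = (Finset.image x Finset.univ).card := by
            rw [Finset.card_image_of_injective _ hx.injective, Finset.card_univ, Fintype.card_fin]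
      _ ≤ _ := Finset.card_le_card hsub
  have h2 := key p hpne
  have h3 : p.support.card ≤ l := by
    calc p.support.card ≤ (Finset.image e Finset.univ).card := Finset.card_le_card hsupp
      _ ≤ l := Finset.card_image_le.trans (by simp)
  omega


lemma perm_sum_lt {l : ℕ} (g h : Fin l → ℝ) (hg : StrictMono g) (hh : StrictMono h)
    (σ : Equiv.Perm (Fin l)) (hσ : σ ≠ 1) :
    ∑ i, g (σ i) * h i < ∑ i, g i * h i := by
  have hmono : Monovary g h := fun i j hij => (hg.le_iff_le.2 (hh.lt_iff_lt.1 hij).le)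
  have key := (Monovary.sum_comp_perm_smul_lt_sum_smul_iff (σ := σ) hmono).2
  simp only [smul_eq_mul] at key
  apply key
  intro hmon
  apply hσ
  have hmonot : Monotone (fun i => σ i) := by
    intro i j hij
    rcases eq_or_lt_of_le hij with rfl | hij'
    · exact le_rfl
    · exact hg.le_iff_le.1 (hmon (hh hij'))
  have hsm : StrictMono (fun i => σ i) := hmonot.strictMono_of_injective σ.injective
  have hinv : StrictMono (fun i => σ⁻¹ i) := by
    intro i j hij
    by_contra hle
    push_neg at hle
    have : j ≤ i := by
      have := hmonot hle
      simpa using this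
    exact absurd hij (not_lt.2 this)
  have instwf : WellFoundedLT (Fin l) := inferInstance
  ext i
  have h1 : i ≤ σ i := @StrictMono.le_apply (Fin l) _ instwf _ hsm i
  have h2 : σ i ≤ i := by
    have h3 := @StrictMono.le_apply (Fin l) _ instwf _ hinv (σ i)
    simpa using h3
  simp [le_antisymm h2 h1]

theorem stmt4 (n k : ℕ) (t : Fin n → ℝ) (ht0 : ∀ i, 0 < t i) (ht : StrictMono t)
    (l : ℕ) (r : Fin l → Fin n) (c : Fin l → Fin (k + 1))
    (hr : StrictMono r) (hc : StrictMono c) :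
    0 < Matrix.det
      ((Matrix.of fun (i : Fin n) (j : Fin (k + 1)) => t i ^ (j : ℕ)).submatrix r c) := by
  classical
  have key : ∀ p : ℝ[X], p ≠ 0 →
      ((p.roots.toFinset.filter (fun y => 0 < y)).card < p.support.card) :=
    fun p hp => posRoots_card_lt_support p.natDegree p le_rfl hp
  set x : Fin l → ℝ := fun i => t (r i) with hxdef
  have hx0 : ∀ i, 0 < x i := fun i => ht0 _
  have hx : StrictMono x := ht.comp hr
  set e : Fin l → ℕ := fun j => (c j : ℕ) with hedef
  have he : StrictMono e := fun a b hab => hc hab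
  set L : Fin l → ℝ := fun i => Real.log (x i) with hLdef
  have hL : StrictMono L := fun i j hij => Real.log_lt_log (hx0 i) (hx hij)
  set w : Equiv.Perm (Fin l) → ℝ := fun σ => ∑ i, (e i : ℝ) * L (σ i) with hwdef
  set f : ℝ → ℝ := fun s => ∑ σ : Equiv.Perm (Fin l),
    ((Equiv.Perm.sign σ : ℤ) : ℝ) * Real.exp (s * w σ) with hfdef
  have hfdet : ∀ s : ℝ,
      f s = Matrix.det (Matrix.of fun i j : Fin l => (Real.exp (s * L i)) ^ (e j)) := by
    intro s
    rw [Matrix.det_apply']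
    refine Finset.sum_congr rfl fun σ _ => ?_
    congr 1
    calc Real.exp (s * w σ)
        = Real.exp (∑ i, (e i : ℝ) * (s * L (σ i))) := by
          congr 1
          rw [hwdef, Finset.mul_sum]
          exact Finset.sum_congr rfl fun i _ => by ring
      _ = ∏ i, Real.exp ((e i : ℝ) * (s * L (σ i))) := Real.exp_sum _ _
      _ = ∏ i, (Real.exp (s * L (σ i))) ^ (e i) :=
          Finset.prod_congr rfl fun i _ => Real.exp_nat_mul _ _
  have hfne : ∀ s : ℝ, 0 < s → f s ≠ 0 := by
    intro s hs
    rw [hfdet s]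
    refine vandermonde_det_ne_zero _ (fun i => Real.exp_pos _) ?_ e he key
    intro i j hij
    exact Real.exp_lt_exp.2 (mul_lt_mul_of_pos_left (hL hij) hs)
  have hgoal : ((Matrix.of fun (i : Fin n) (j : Fin (k + 1)) => t i ^ (j : ℕ)).submatrix r c)
      = Matrix.of fun i j : Fin l => (Real.exp (1 * L i)) ^ (e j) := by
    ext i j
    simp only [Matrix.submatrix_apply, Matrix.of_apply, one_mul, hLdef]
    rw [Real.exp_log (hx0 i)]
  have hww : ∀ σ : Equiv.Perm (Fin l), σ ≠ 1 → w σ < w 1 := by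
    intro σ hσ
    have h1 : w σ = ∑ j, (e (σ⁻¹ j) : ℝ) * L j := by
      rw [hwdef]
      exact Fintype.sum_equiv σ (fun i => (e i : ℝ) * L (σ i))
        (fun j => (e (σ⁻¹ j) : ℝ) * L j) (fun i => by simp)
    have h2 : w 1 = ∑ j, (e j : ℝ) * L j := by
      rw [hwdef]
      simp
    rw [h1, h2]
    exact perm_sum_lt (fun i => (e i : ℝ)) L
      (fun i j hij => Nat.cast_lt.2 (he hij)) hL σ⁻¹ (by simpa using hσ)
  have hcont : Continuous f := by
    rw [hfdef]
    exact continuous_finset_sum _ fun σ _ =>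
      continuous_const.mul (Real.continuous_exp.comp (continuous_id.mul continuous_const))
  have hlim : Tendsto (fun s => f s * Real.exp (-(s * w 1))) atTop (nhds 1) := by
    have hrw : ∀ s, f s * Real.exp (-(s * w 1)) = ∑ σ : Equiv.Perm (Fin l),
        ((Equiv.Perm.sign σ : ℤ) : ℝ) * Real.exp (s * (w σ - w 1)) := by
      intro s
      rw [hfdef, Finset.sum_mul]
      refine Finset.sum_congr rfl fun σ _ => ?_
      rw [mul_assoc, ← Real.exp_add]
      congr 2
      ring
    have h2 : Tendsto (fun s => ∑ σ : Equiv.Perm (Fin l),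
        ((Equiv.Perm.sign σ : ℤ) : ℝ) * Real.exp (s * (w σ - w 1))) atTop
        (nhds (∑ σ : Equiv.Perm (Fin l), if σ = 1 then (1 : ℝ) else 0)) := by
      apply tendsto_finset_sum
      intro σ _
      by_cases hσ : σ = 1
      · subst hσ
        simp only [sub_self, mul_zero, Real.exp_zero, mul_one, if_true]
        exact tendsto_const_nhds.congr (by simp)
      · rw [if_neg hσ]
        have hneg : w σ - w 1 < 0 := sub_neg.2 (hww σ hσ)
        have h3 : Tendsto (fun s : ℝ => s * (w σ - w 1)) atTop atBot :=
          (tendsto_mul_const_atBot_of_neg hneg).2 tendsto_id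
        have h4 := Real.tendsto_exp_atBot.comp h3
        simpa using h4.const_mul (((Equiv.Perm.sign σ : ℤ) : ℝ))
    have heq : (fun s => f s * Real.exp (-(s * w 1))) = fun s => ∑ σ : Equiv.Perm (Fin l),
        ((Equiv.Perm.sign σ : ℤ) : ℝ) * Real.exp (s * (w σ - w 1)) := funext hrw
    rw [heq]
    simpa using h2
  have hfin : 0 < f 1 := by
    rcases lt_trichotomy 0 (f 1) with h | h | h
    · exact h
    · exact absurd h.symm (hfne 1 one_pos)
    · exfalso
      obtain ⟨S, hFS, hS2⟩ :=
        ((hlim.eventually (eventually_gt_nhds zero_lt_one)).and (eventually_ge_atTop 2)).exists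
      have hfS : 0 < f S := by
        rcases mul_pos_iff.1 hFS with ⟨h1, _⟩ | ⟨_, h2⟩
        · exact h1
        · exact absurd h2 (not_lt.2 (Real.exp_pos _).le)
      have h12 : (1 : ℝ) ≤ S := by linarith
      obtain ⟨z, hzmem, hz⟩ := intermediate_value_Icc h12 hcont.continuousOn
        (Set.mem_Icc.2 ⟨h.le, hfS.le⟩)
      exact hfne z (lt_of_lt_of_le zero_lt_one hzmem.1) hz
  rw [hgoal]
  exact (hfdet 1) ▸ hfin
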